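/- arXiv:2007.05437 — 4 statements merged into one kernel-verified Lean document; each statement's English description precedes it below -/
import Mathlib

section
/- Let G be a finite simple graph, v a vertex, and let the ego-network G_{N(v)} be the subgraph of G induced by the neighbors of v. If H is a subgraph of G_{N(v)} in which every edge has support at least k-2 within H, then the graph H' obtained by adding v together with all edges from v to vertices of H has the property that every edge of H' has support at least k-1 within H'. -/
open SimpleGraph

/-- The support of an edge `(u,v)` in `H`: the number of common neighbors of `u` and `v`. -/
noncomputable def edgeSup {V : Type*} (H : SimpleGraph V) (u v : V) : ℕ :=
  Set.ncard {w | H.Adj u w ∧ H.Adj v w}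

/-- The ego-network of `v` in `G`: the subgraph of `G` induced by the neighbors of `v`
(as a graph on the same vertex set, with all non-neighbors isolated). -/
def ego {V : Type*} (G : SimpleGraph V) (v : V) : SimpleGraph V where
  Adj a b := G.Adj a b ∧ G.Adj v a ∧ G.Adj v b
  symm := ⟨fun a b h => ⟨h.1.symm, h.2.2, h.2.1⟩⟩
  loopless := ⟨fun a h => G.loopless.irrefl a h.1⟩

theorem stmt2 {V : Type*} [Fintype V] (G : SimpleGraph V) (v : V) (k : ℕ) (hk : 2 ≤ k)
    (H : SimpleGraph V) (hH : H ≤ ego G v)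
    (hsup : ∀ u w, H.Adj u w → k - 2 ≤ edgeSup H u w) :
    ∀ a b, (H ⊔ SimpleGraph.fromEdgeSet {e | ∃ u ∈ H.support, e = s(v, u)}).Adj a b →
      k - 1 ≤ edgeSup (H ⊔ SimpleGraph.fromEdgeSet {e | ∃ u ∈ H.support, e = s(v, u)}) a b := by
  intro a b hab
  set S : Set (Sym2 V) := {e | ∃ u ∈ H.support, e = s(v, u)} with hS
  set H' := H ⊔ SimpleGraph.fromEdgeSet S with hH'
  have hvH : ∀ x, ¬ H.Adj v x := by
    intro x hx
    exact G.loopless.irrefl v (hH hx).2.1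
  have hvsup : ∀ x, x ∈ H.support → H'.Adj v x := by
    intro x hx
    rw [hH', sup_adj, fromEdgeSet_adj]
    refine Or.inr ⟨⟨x, hx, rfl⟩, ?_⟩
    rintro rfl
    obtain ⟨y, hy⟩ := hx
    exact hvH y hy
  have hHle : H ≤ H' := le_sup_left
  have key : ∀ u, u ∈ H.support → k - 1 ≤ edgeSup H' v u := by
    intro u hu
    obtain ⟨w, hw⟩ := hu
    have hsub : insert w {x | H.Adj u x ∧ H.Adj w x} ⊆ {x | H'.Adj v x ∧ H'.Adj u x} := by
      rintro x (rfl | ⟨h1, h2⟩)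
      · exact ⟨hvsup x ⟨u, hw.symm⟩, hHle hw⟩
      · exact ⟨hvsup x ⟨u, h1.symm⟩, hHle h1⟩
    have hnw : w ∉ {x | H.Adj u x ∧ H.Adj w x} := fun h => H.loopless.irrefl w h.2
    calc k - 1 = (k - 2) + 1 := by omega
      _ ≤ edgeSup H u w + 1 := by have := hsup u w hw; omega
      _ = (insert w {x | H.Adj u x ∧ H.Adj w x}).ncard := by
          rw [Set.ncard_insert_of_notMem hnw (Set.toFinite _)]
          rfl
      _ ≤ _ := Set.ncard_le_ncard hsub (Set.toFinite _)
  rcases hab with h | h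
  · have ha : a ∈ H.support := ⟨b, h⟩
    have hb : b ∈ H.support := ⟨a, h.symm⟩
    have hsub : insert v {w | H.Adj a w ∧ H.Adj b w} ⊆ {w | H'.Adj a w ∧ H'.Adj b w} := by
      rintro x (rfl | ⟨h1, h2⟩)
      · exact ⟨(hvsup a ha).symm, (hvsup b hb).symm⟩
      · exact ⟨hHle h1, hHle h2⟩
    have hnv : v ∉ {w | H.Adj a w ∧ H.Adj b w} := fun h' => hvH a h'.1.symm
    calc k - 1 = (k - 2) + 1 := by omega
      _ ≤ edgeSup H a b + 1 := by have := hsup a b h; omega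
      _ = (insert v {w | H.Adj a w ∧ H.Adj b w}).ncard := by
          rw [Set.ncard_insert_of_notMem hnv (Set.toFinite _)]
          rfl
      _ ≤ _ := Set.ncard_le_ncard hsub (Set.toFinite _)
  · obtain ⟨⟨u, hu, he⟩, hne⟩ := h
    rw [Sym2.eq_iff] at he
    rcases he with ⟨rfl, rfl⟩ | ⟨h1, h2⟩
    · exact key b hu
    · have heq : edgeSup H' v a = edgeSup H' a v := by
        unfold edgeSup
        congr 1
        ext x
        exact and_comm
      rw [h2, ← heq]
      exact key a (by rw [h1]; exact hu)
end

section
/- For any vertex v of a finite simple graph G, the number of connected components of the k-truss of the ego-network G_{N(v)} is at most ⌊d(v)/k⌋, where d(v) is the degree of v. -/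
open SimpleGraph

/-- The support of an edge `(u,v)` inside a subgraph `H`: the number of common
neighbors of `u` and `v` within `H`. -/
noncomputable def supS {V : Type*} {G : SimpleGraph V} (H : G.Subgraph) (u v : V) : ℕ :=
  Set.ncard {w | H.Adj u w ∧ H.Adj v w}

theorem stmt4 {V : Type*} [Fintype V] (G : SimpleGraph V) (v : V) (k : ℕ) (hk : 2 ≤ k)
    (T : (ego G v).Subgraph)
    (hspan : ∀ x ∈ T.verts, ∃ y, T.Adj x y)
    (htruss : ∀ x y, T.Adj x y → k - 2 ≤ supS T x y) :
    Nat.card T.coe.ConnectedComponent ≤ (G.neighborSet v).ncard / k := by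
  classical
  have hkpos : 0 < k := by omega
  haveI : Fintype T.verts := Fintype.ofFinite _
  haveI : Fintype T.coe.ConnectedComponent := Fintype.ofFinite _
  -- the vertex set of each component, as a set in V
  set S : T.coe.ConnectedComponent → Set V :=
    fun c => Subtype.val '' {x : T.verts | T.coe.connectedComponentMk x = c} with hS
  -- each S c is contained in the neighbor set of v
  have hsub : ∀ c, S c ⊆ G.neighborSet v := by
    rintro c w ⟨⟨x, hx⟩, _, rfl⟩
    obtain ⟨y, hxy⟩ := hspan x hx
    exact (show (ego G v).Adj x y from T.adj_sub hxy).2.1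
  -- adjacency in T puts vertices in the same component
  have hadj_comp : ∀ (a b : V) (ha : a ∈ T.verts) (hb : b ∈ T.verts),
      T.Adj a b → T.coe.connectedComponentMk ⟨a, ha⟩ = T.coe.connectedComponentMk ⟨b, hb⟩ := by
    intro a b ha hb h
    exact SimpleGraph.ConnectedComponent.sound
      (SimpleGraph.Adj.reachable (by exact h : T.coe.Adj ⟨a, ha⟩ ⟨b, hb⟩))
  -- each S c has at least k elements
  have hk_le : ∀ c, k ≤ (S c).ncard := by
    intro c
    obtain ⟨⟨x, hx⟩, rfl⟩ := c.exists_rep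
    show k ≤ (S (T.coe.connectedComponentMk ⟨x, hx⟩)).ncard
    obtain ⟨y, hxy⟩ := hspan x hx
    have hy : y ∈ T.verts := hxy.snd_mem
    have hxy' : x ≠ y := hxy.ne
    set W : Set V := {w | T.Adj x w ∧ T.Adj y w} with hW
    have hWfin : W.Finite := Set.toFinite _
    have hxW : x ∉ W := fun h => h.1.ne rfl
    have hyW : y ∉ W := fun h => h.2.ne rfl
    have hWcard : k - 2 ≤ W.ncard := htruss x y hxy
    have hsub2 : insert x (insert y W) ⊆ S (T.coe.connectedComponentMk ⟨x, hx⟩) := by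
      rintro w (rfl | rfl | hw)
      · exact ⟨⟨w, hx⟩, rfl, rfl⟩
      · exact ⟨⟨w, hy⟩, (hadj_comp x w hx hy hxy).symm, rfl⟩
      · have hwv : w ∈ T.verts := hw.1.snd_mem
        exact ⟨⟨w, hwv⟩, (hadj_comp x w hx hwv hw.1).symm, rfl⟩
    have hcard : (insert x (insert y W)).ncard = W.ncard + 2 := by
      rw [Set.ncard_insert_of_notMem (by simp [hxW, hxy']) (hWfin.insert y),
        Set.ncard_insert_of_notMem hyW hWfin]
    have := Set.ncard_le_ncard hsub2 (Set.toFinite _)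
    omega
  -- counting
  set F : T.coe.ConnectedComponent → Finset V := fun c => (S c).toFinset with hF
  have hdisj : ∀ c ∈ Finset.univ, ∀ c' ∈ Finset.univ, c ≠ c' →
      Disjoint (F c) (F c') := by
    intro c _ c' _ hne
    rw [Finset.disjoint_left]
    intro w hw hw'
    simp only [hF, Set.mem_toFinset, hS] at hw hw'
    obtain ⟨a, ha, rfl⟩ := hw
    obtain ⟨b, hb, hab⟩ := hw'
    exact hne (ha ▸ hb ▸ congrArg _ (Subtype.ext hab.symm))
  have hcard_union : (Finset.univ.biUnion F).card = ∑ c, (F c).card :=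
    Finset.card_biUnion hdisj
  have hsub3 : Finset.univ.biUnion F ⊆ (G.neighborSet v).toFinset := by
    intro w hw
    obtain ⟨c, _, hc⟩ := Finset.mem_biUnion.mp hw
    rw [Set.mem_toFinset]
    exact hsub c (by simpa [hF] using hc)
  have hsum_le : ∑ c, (F c).card ≤ (G.neighborSet v).ncard := by
    rw [← hcard_union, Set.ncard_eq_toFinset_card']
    exact Finset.card_le_card hsub3
  have hlow : Fintype.card T.coe.ConnectedComponent * k ≤ ∑ c, (F c).card := by
    calc Fintype.card T.coe.ConnectedComponent * k
        = ∑ _c : T.coe.ConnectedComponent, k := by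
          rw [Finset.sum_const, smul_eq_mul, Fintype.card]
      _ ≤ ∑ c, (F c).card := Finset.sum_le_sum fun c _ => by
          simpa [hF, Set.ncard_eq_toFinset_card'] using hk_le c
  rw [Nat.card_eq_fintype_card, Nat.le_div_iff_mul_le hkpos]
  omega
end

section
/- In a weighted finite simple graph W (with weights given by edge trussness in an ego-network), a maximum-weight spanning forest F of W has the property that for every threshold k, the connected components of the subgraph of F consisting of edges of weight at least k have the same vertex sets as the connected components of the subgraph of W consisting of edges of weight at least k. -/
open SimpleGraph

/-- The subgraph of `G` formed by the edges of weight at least `k`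
(with respect to the edge-weight function `w`). -/
def restrictW {V : Type*} (G : SimpleGraph V) (w : Sym2 V → ℕ) (k : ℕ) : SimpleGraph V where
  Adj a b := G.Adj a b ∧ k ≤ w s(a, b)
  symm := ⟨fun a b h => ⟨h.1.symm, by rw [Sym2.eq_swap]; exact h.2⟩⟩
  loopless := ⟨fun a h => G.loopless.irrefl a h.1⟩

/-- `F` is a spanning forest of `W`: an acyclic subgraph with the same
connected components as `W`. -/
def IsSpanningForest {V : Type*} (W F : SimpleGraph V) : Prop :=
  F ≤ W ∧ F.IsAcyclic ∧ ∀ a b : V, F.Reachable a b ↔ W.Reachable a b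

/-- The total weight of a graph: the sum of the weights of its edges. -/
noncomputable def totalWeight {V : Type*} (F : SimpleGraph V) (w : Sym2 V → ℕ) : ℕ :=
  ∑ᶠ e ∈ F.edgeSet, w e

section Aux

variable {V : Type*}

/-- If all edges of `G` have their endpoints reachable in `H`, reachability in `G`
implies reachability in `H`. -/
lemma reach_of_adj_reach {G H : SimpleGraph V}
    (h : ∀ p q : V, G.Adj p q → H.Reachable p q) {a b : V}
    (hr : G.Reachable a b) : H.Reachable a b := by
  obtain ⟨p⟩ := hr
  induction p with
  | nil => exact Reachable.refl _
  | cons hadj _ ih => exact (h _ _ hadj).trans ih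

/-- Splitting a walk with nodup edges at an edge `s(x,y)`, assuming all other
edges lie in `H`. -/
lemma walk_split {G H : SimpleGraph V} {x y : V} :
    ∀ {u v : V} (p : G.Walk u v), p.edges.Nodup → s(x, y) ∈ p.edges →
    (∀ e ∈ p.edges, e ≠ s(x, y) → e ∈ H.edgeSet) →
    (H.Reachable u x ∧ H.Reachable y v) ∨ (H.Reachable u y ∧ H.Reachable x v) := by
  intro u v p
  induction p with
  | nil => intro _ hmem; simp at hmem
  | @cons u c v hadj q ih =>
    intro hnd hmem hH
    rw [SimpleGraph.Walk.edges_cons] at hmem hH hnd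
    rw [List.nodup_cons] at hnd
    rcases List.mem_cons.mp hmem with heq | hmem'
    · -- the first edge is s(x,y)
      have hq : ∀ e ∈ q.edges, e ∈ H.edgeSet := by
        intro e he
        refine hH e (List.mem_cons_of_mem _ he) ?_
        rintro rfl
        exact hnd.1 (heq ▸ he)
      have hqw : H.Reachable c v := ⟨q.transfer H hq⟩
      rcases Sym2.eq_iff.mp heq with ⟨rfl, rfl⟩ | ⟨rfl, rfl⟩
      · exact Or.inl ⟨Reachable.refl _, hqw⟩
      · exact Or.inr ⟨Reachable.refl _, hqw⟩
    · -- the first edge is in H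
      have hne : s(u, c) ≠ s(x, y) := by
        rintro heq
        rw [heq] at hnd
        exact hnd.1 hmem'
      have huc : H.Reachable u c := by
        have := hH s(u, c) List.mem_cons_self hne
        exact (H.mem_edgeSet.mp this).reachable
      rcases ih hnd.2 hmem' (fun e he h' => hH e (List.mem_cons_of_mem _ he) h') with
        ⟨h1, h2⟩ | ⟨h1, h2⟩
      · exact Or.inl ⟨huc.trans h1, h2⟩
      · exact Or.inr ⟨huc.trans h1, h2⟩

lemma isAcyclic_mono {G H : SimpleGraph V} (hle : H ≤ G) (hG : G.IsAcyclic) :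
    H.IsAcyclic := by
  intro v c hc
  exact hG (c.transfer G fun e he =>
    SimpleGraph.edgeSet_mono hle (c.edges_subset_edgeSet he)) (hc.transfer _)

/-- Adding to an acyclic graph an edge between two vertices that are not
reachable from one another keeps the graph acyclic. -/
lemma isAcyclic_sup_edge {G : SimpleGraph V} {u v : V} (hG : G.IsAcyclic)
    (hnr : ¬ G.Reachable u v) :
    (G ⊔ SimpleGraph.fromEdgeSet {s(u, v)}).IsAcyclic := by
  have hne : u ≠ v := by rintro rfl; exact hnr (Reachable.refl _)
  intro a c hc
  by_cases hmem : s(u, v) ∈ c.edges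
  · have hsplit := walk_split (H := G) c hc.edges_nodup hmem ?_
    · rcases hsplit with ⟨h1, h2⟩ | ⟨h1, h2⟩
      · exact hnr (h1.symm.trans h2.symm)
      · exact hnr (h2.trans h1)
    · intro e he hne'
      have := c.edges_subset_edgeSet he
      rw [SimpleGraph.edgeSet_sup, SimpleGraph.edgeSet_fromEdgeSet] at this
      rcases this with h | h
      · exact h
      · rw [Set.mem_diff, Set.mem_singleton_iff] at h
        exact absurd h.1 hne'
  · have : ∀ e ∈ c.edges, e ∈ G.edgeSet := by
      intro e he
      have := c.edges_subset_edgeSet he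
      rw [SimpleGraph.edgeSet_sup, SimpleGraph.edgeSet_fromEdgeSet] at this
      rcases this with h | h
      · exact h
      · rw [Set.mem_diff, Set.mem_singleton_iff] at h
        exact absurd (h.1 ▸ he) hmem
    exact hG (c.transfer G this) (hc.transfer _)

end Aux

theorem stmt7 {V : Type*} [Fintype V] (W F : SimpleGraph V) (w : Sym2 V → ℕ)
    (hsf : IsSpanningForest W F)
    (hmax : ∀ F', IsSpanningForest W F' → totalWeight F' w ≤ totalWeight F w) :
    ∀ (k : ℕ) (a b : V),
      (∃ x, (restrictW W w k).Adj a x) → (∃ y, (restrictW W w k).Adj b y) →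
      ((restrictW F w k).Reachable a b ↔ (restrictW W w k).Reachable a b) := by
  classical
  obtain ⟨hFW, hacyc, hreach⟩ := hsf
  intro k a b _ _
  have hFk_le : restrictW F w k ≤ restrictW W w k := fun p q h => ⟨hFW h.1, h.2⟩
  constructor
  · exact fun h => h.mono hFk_le
  · -- key lemma: every edge of W of weight ≥ k has its endpoints connected in F_k
    have key : ∀ u v : V, W.Adj u v → k ≤ w s(u, v) → (restrictW F w k).Reachable u v := by
      intro u v huv hwk
      by_contra hnr
      have hne : u ≠ v := huv.ne
      -- u and v are reachable in F
      have hRF : F.Reachable u v := (hreach u v).mpr huv.reachable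
      obtain ⟨q⟩ := hRF
      set p := q.toPath.1 with hp
      have hpath : p.IsPath := q.toPath.2
      -- F does not have the edge u v
      have hFuv : ¬ F.Adj u v := by
        intro hadj
        exact hnr ⟨SimpleGraph.Walk.cons ⟨hadj, hwk⟩ SimpleGraph.Walk.nil⟩
      -- some edge of p has weight < k
      have : ¬ ∀ e ∈ p.edges, k ≤ w e := by
        intro hall
        refine hnr ⟨p.transfer (restrictW F w k) ?_⟩
        intro e he
        induction e with
        | _ x y =>
          have hxy : F.Adj x y := p.edges_subset_edgeSet he
          exact (restrictW F w k).mem_edgeSet.mpr ⟨hxy, hall _ he⟩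
      push_neg at this
      obtain ⟨e, he, hwe⟩ := this
      induction e with
      | _ x y =>
      have hxyF : F.Adj x y := p.edges_subset_edgeSet he
      -- the exchanged forest
      set F' : SimpleGraph V :=
        F.deleteEdges {s(x, y)} ⊔ SimpleGraph.fromEdgeSet {s(u, v)} with hF'
      have hdel_le : F.deleteEdges {s(x, y)} ≤ F := SimpleGraph.deleteEdges_le _
      -- split the path at the edge s(x,y)
      have hsplit := walk_split (H := F.deleteEdges {s(x, y)}) p hpath.edges_nodup he ?_
      rotate_left
      · intro e' he' hne'
        rw [SimpleGraph.edgeSet_deleteEdges]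
        exact ⟨p.edges_subset_edgeSet he', by simpa using hne'⟩
      -- u and v are not reachable in F \ e
      have hnr_del : ¬ (F.deleteEdges {s(x, y)}).Reachable u v := by
        intro hRuv
        have hbridge : F.IsBridge s(x, y) :=
          (SimpleGraph.isAcyclic_iff_forall_adj_isBridge.mp hacyc) hxyF
        have hxy_nr : ¬ (F \ SimpleGraph.fromEdgeSet {s(x, y)}).Reachable x y :=
          (SimpleGraph.isBridge_iff.mp hbridge)
        have hdel_eq : F.deleteEdges {s(x, y)} = F \ SimpleGraph.fromEdgeSet {s(x, y)} := rfl
        rw [hdel_eq] at hRuv hsplit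
        rcases hsplit with ⟨h1, h2⟩ | ⟨h1, h2⟩
        · exact hxy_nr (h1.symm.trans (hRuv.trans h2.symm))
        · exact hxy_nr ((h2.trans hRuv.symm).trans h1)
      -- F' is a spanning forest of W
      have hF'sf : IsSpanningForest W F' := by
        refine ⟨?_, ?_, ?_⟩
        · -- F' ≤ W
          refine sup_le (le_trans hdel_le hFW) ?_
          intro p' q' h
          rw [SimpleGraph.fromEdgeSet_adj] at h
          rcases Sym2.eq_iff.mp h.1 with ⟨rfl, rfl⟩ | ⟨rfl, rfl⟩
          · exact huv
          · exact huv.symm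
        · exact isAcyclic_sup_edge (isAcyclic_mono hdel_le hacyc) hnr_del
        · intro c d
          constructor
          · intro h
            refine (hreach c d).mp (reach_of_adj_reach ?_ h)
            intro p' q' hadj
            rcases hadj with hadj | hadj
            · exact (hdel_le hadj).reachable
            · rw [SimpleGraph.fromEdgeSet_adj] at hadj
              rcases Sym2.eq_iff.mp hadj.1 with ⟨rfl, rfl⟩ | ⟨rfl, rfl⟩
              · exact (hreach p' q').mpr huv.reachable
              · exact ((hreach q' p').mpr huv.reachable).symm
          · intro h
            have hF : F.Reachable c d := (hreach c d).mpr h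
            refine reach_of_adj_reach ?_ hF
            intro p' q' hadj
            by_cases hcase : s(p', q') = s(x, y)
            · -- endpoints of e are connected in F'
              have hdel_le' : F.deleteEdges {s(x, y)} ≤ F' := le_sup_left
              have huvF' : F'.Reachable u v := by
                refine SimpleGraph.Adj.reachable ?_
                exact Or.inr ((SimpleGraph.fromEdgeSet_adj _).mpr ⟨rfl, hne⟩)
              have hxyR : F'.Reachable x y := by
                rcases hsplit with ⟨h1, h2⟩ | ⟨h1, h2⟩
                · exact ((h1.mono hdel_le').symm.trans huvF').trans (h2.mono hdel_le').symm
                · exact ((h2.mono hdel_le').trans huvF'.symm).trans (h1.mono hdel_le')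
              rcases Sym2.eq_iff.mp hcase with ⟨rfl, rfl⟩ | ⟨rfl, rfl⟩
              · exact hxyR
              · exact hxyR.symm
            · refine SimpleGraph.Adj.reachable (Or.inl ?_)
              rw [SimpleGraph.deleteEdges_adj]
              exact ⟨hadj, by simpa using hcase⟩
      -- weight comparison: F' is heavier, contradiction
      have hne_e : s(u, v) ≠ s(x, y) := by
        intro h
        rcases Sym2.eq_iff.mp h with ⟨rfl, rfl⟩ | ⟨rfl, rfl⟩
        · exact hFuv hxyF
        · exact hFuv hxyF.symm
      have hsuv_not : s(u, v) ∉ F.edgeSet := fun h => hFuv (F.mem_edgeSet.mp h)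
      have hE' : F'.edgeSet = (F.edgeSet \ {s(x, y)}) ∪ {s(u, v)} := by
        rw [hF', SimpleGraph.edgeSet_sup, SimpleGraph.edgeSet_deleteEdges,
          SimpleGraph.edgeSet_fromEdgeSet]
        congr 1
        ext e'
        simp only [Set.mem_diff, Set.mem_singleton_iff, Set.mem_setOf_eq]
        constructor
        · exact fun h => h.1
        · rintro rfl
          exact ⟨rfl, by simp [Sym2.isDiag_iff_proj_eq, hne]⟩
      have hE : F.edgeSet = (F.edgeSet \ {s(x, y)}) ∪ {s(x, y)} := by
        rw [Set.diff_union_self, Set.union_eq_self_of_subset_right]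
        simpa using hxyF
      have hfin : (F.edgeSet \ {s(x, y)}).Finite := Set.toFinite _
      have hdisj1 : Disjoint (F.edgeSet \ {s(x, y)}) {s(u, v)} := by
        rw [Set.disjoint_singleton_right]
        exact fun h => hsuv_not h.1
      have hdisj2 : Disjoint (F.edgeSet \ {s(x, y)}) {s(x, y)} :=
        Set.disjoint_sdiff_left.mono_right le_rfl
      have hw' : totalWeight F' w = (∑ᶠ e ∈ F.edgeSet \ {s(x, y)}, w e) + w s(u, v) := by
        rw [totalWeight, hE', finsum_mem_union hdisj1 hfin (Set.finite_singleton _),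
          finsum_mem_singleton]
      have hw : totalWeight F w = (∑ᶠ e ∈ F.edgeSet \ {s(x, y)}, w e) + w s(x, y) := by
        rw [totalWeight]
        conv_lhs => rw [hE]
        rw [finsum_mem_union hdisj2 hfin (Set.finite_singleton _), finsum_mem_singleton]
      have hlt : totalWeight F w < totalWeight F' w := by
        rw [hw, hw']
        exact Nat.add_lt_add_left (lt_of_lt_of_le hwe hwk) _
      exact absurd (hmax F' hF'sf) (not_le.mpr hlt)
    intro h
    exact reach_of_adj_reach (G := restrictW W w k) (H := restrictW F w k)
      (fun p q hadj => key p q hadj.1 hadj.2) h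
end

section
/- For a graph G with arboricity ρ, the sum over all edges (u,v) of min{d(u), d(v)} is at most 2ρ·m, where m is the number of edges. -/
open SimpleGraph

private lemma my_acyclic_anti {V : Type*} {G H : SimpleGraph V} (h : H ≤ G)
    (hG : G.IsAcyclic) : H.IsAcyclic := by
  intro v c hc
  exact hG (c.mapLe h) (hc.mapLe h)

/-- In a finite acyclic graph with an edge, there is a vertex with a unique neighbor. -/
private lemma my_exists_leaf {V : Type*} [Fintype V] {F : SimpleGraph V} (hF : F.IsAcyclic)
    {u₀ v₀ : V} (h₀ : F.Adj u₀ v₀) :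
    ∃ a x, F.Adj a x ∧ ∀ z, F.Adj a z → z = x := by
  classical
  set P : ℕ → Prop := fun n => ∃ (a b : V) (p : F.Walk a b), p.IsPath ∧ p.length = n with hP
  have h1 : P 1 := ⟨u₀, v₀, Walk.cons h₀ Walk.nil, by simp [h₀.ne], by simp⟩
  have hbd : ∀ n, P n → n ≤ Fintype.card V := by
    rintro n ⟨a, b, p, hp, rfl⟩
    exact hp.length_lt.le
  set N := Nat.findGreatest P (Fintype.card V) with hN
  have hPN : P N := Nat.findGreatest_spec (hbd 1 h1) h1
  have hmax : ∀ m, N < m → ¬ P m := by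
    intro m hm hPm
    exact Nat.findGreatest_is_greatest hm (hbd m hPm) hPm
  obtain ⟨a, b, p, hp, hlen⟩ := hPN
  have hN1 : 1 ≤ N := Nat.le_findGreatest (hbd 1 h1) h1
  cases p with
  | nil => simp at hlen; omega
  | @cons _ x _ h q =>
    rw [SimpleGraph.Walk.cons_isPath_iff] at hp
    obtain ⟨hq, haq⟩ := hp
    refine ⟨a, x, h, ?_⟩
    intro z hz
    by_contra hne
    have hza : z ≠ a := hz.ne'
    by_cases hzs : z ∈ q.support
    · -- build a cycle
      have ht : (q.takeUntil z hzs).IsPath := hq.takeUntil hzs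
      have hat : a ∉ (q.takeUntil z hzs).support :=
        fun hc => haq (q.support_takeUntil_subset hzs hc)
      have hr : (Walk.cons h (q.takeUntil z hzs)).IsPath :=
        (SimpleGraph.Walk.cons_isPath_iff _ _).2 ⟨ht, hat⟩
      have hedge : s(z, a) ∉ (Walk.cons h (q.takeUntil z hzs)).edges := by
        simp only [Walk.edges_cons, List.mem_cons]
        rintro (hc | hc)
        · rw [Sym2.eq_iff] at hc
          rcases hc with ⟨rfl, rfl⟩ | ⟨rfl, -⟩
          · exact hza rfl
          · exact hne rfl
        · exact haq (q.snd_mem_support_of_mem_edges (q.edges_takeUntil_subset hzs hc))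
      have : (Walk.cons hz.symm (Walk.cons h (q.takeUntil z hzs))).IsCycle :=
        (SimpleGraph.Walk.cons_isCycle_iff _ _).2 ⟨hr, hedge⟩
      exact hF _ this
    · -- extend the path
      have hp' : (Walk.cons hz.symm (Walk.cons h q)).IsPath := by
        rw [SimpleGraph.Walk.cons_isPath_iff]
        refine ⟨(SimpleGraph.Walk.cons_isPath_iff _ _).2 ⟨hq, haq⟩, ?_⟩
        simp only [Walk.support_cons, List.mem_cons]
        rintro (rfl | hc)
        · exact hza rfl
        · exact hzs hc
      exact hmax (N + 1) (Nat.lt_succ_self N)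
        ⟨z, b, _, hp', by simp [hlen]⟩

private lemma my_sum_biUnion_le {ι α : Type*} [DecidableEq α] (s : Finset ι)
    (t : ι → Finset α) (f : α → ℕ) :
    ∑ e ∈ s.biUnion t, f e ≤ ∑ i ∈ s, ∑ e ∈ t i, f e := by
  classical
  induction s using Finset.induction with
  | empty => simp
  | insert _ _ hnot ih =>
    rename_i a s
    rw [Finset.biUnion_insert, Finset.sum_insert hnot]
    calc ∑ e ∈ t a ∪ s.biUnion t, f e
        ≤ ∑ e ∈ t a, f e + ∑ e ∈ s.biUnion t, f e := by
          have := Finset.sum_union_inter (s₁ := t a) (s₂ := s.biUnion t) (f := f)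
          omega
      _ ≤ _ := by omega

/-- Key lemma: summing `min (d u) (d v)` over the edges of a forest is at most `∑ v, d v`. -/
private lemma my_forest_sum {V : Type*} [Fintype V] (n : ℕ) :
    ∀ (F : SimpleGraph V), F.IsAcyclic → F.edgeSet.ncard = n → ∀ d : V → ℕ,
      (∑ᶠ e ∈ F.edgeSet,
          Sym2.lift ⟨fun u v => min (d u) (d v), fun u v => min_comm _ _⟩ e)
        ≤ ∑ v, d v := by
  classical
  induction n with
  | zero =>
    intro F hF hcard d
    have hfin : F.edgeSet.Finite := Set.toFinite _
    rw [(Set.ncard_eq_zero hfin).1 hcard, finsum_mem_empty]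
    exact Nat.zero_le _
  | succ n ih =>
    intro F hF hcard d
    have hfin : F.edgeSet.Finite := Set.toFinite _
    have hne : F.edgeSet.Nonempty := by
      rw [Set.nonempty_iff_ne_empty]
      intro hc
      rw [hc] at hcard; simp at hcard
    obtain ⟨e₀, he₀⟩ := hne
    induction e₀ with
    | _ u₀ v₀ =>
      rw [SimpleGraph.mem_edgeSet] at he₀
      obtain ⟨a, x, hax, huniq⟩ := my_exists_leaf hF he₀
      set F' := F.deleteEdges {s(a, x)} with hF'def
      have hF'le : F' ≤ F := F.deleteEdges_le _
      have hF'ac : F'.IsAcyclic := my_acyclic_anti hF'le hF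
      have hES : F'.edgeSet = F.edgeSet \ {s(a, x)} := SimpleGraph.edgeSet_deleteEdges _
      have hmem : s(a, x) ∈ F.edgeSet := hax
      have hcard' : F'.edgeSet.ncard = n := by
        rw [hES, Set.ncard_diff_singleton_of_mem hmem, hcard]
        omega
      -- no edge of F' touches a
      have hnota : ∀ z, ¬ F'.Adj a z := by
        intro z hz
        rw [hF'def, SimpleGraph.deleteEdges_adj] at hz
        obtain ⟨hz1, hz2⟩ := hz
        exact hz2 (by rw [huniq z hz1]; exact Set.mem_singleton _)
      set d' : V → ℕ := Function.update d a 0 with hd'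
      -- the sums as finset sums
      have hfin' : F'.edgeSet.Finite := Set.toFinite _
      have hTF : hfin'.toFinset = hfin.toFinset.erase s(a, x) := by
        ext e
        simp only [Set.Finite.mem_toFinset, Finset.mem_erase, hES, Set.mem_diff,
          Set.mem_singleton_iff]
        tauto
      have hmemF : s(a, x) ∈ hfin.toFinset := by rwa [Set.Finite.mem_toFinset]
      have hsplit : (∑ᶠ e ∈ F.edgeSet,
            Sym2.lift ⟨fun u v => min (d u) (d v), fun u v => min_comm _ _⟩ e)
          = min (d a) (d x) + ∑ᶠ e ∈ F'.edgeSet,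
            Sym2.lift ⟨fun u v => min (d u) (d v), fun u v => min_comm _ _⟩ e := by
        rw [finsum_mem_eq_finite_toFinset_sum _ hfin,
            finsum_mem_eq_finite_toFinset_sum _ hfin', hTF,
            ← Finset.add_sum_erase _ _ hmemF]
        simp
      have heq : (∑ᶠ e ∈ F'.edgeSet,
            Sym2.lift ⟨fun u v => min (d u) (d v), fun u v => min_comm _ _⟩ e)
          = ∑ᶠ e ∈ F'.edgeSet,
            Sym2.lift ⟨fun u v => min (d' u) (d' v), fun u v => min_comm _ _⟩ e := by
        rw [finsum_mem_eq_finite_toFinset_sum _ hfin',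
            finsum_mem_eq_finite_toFinset_sum _ hfin']
        apply Finset.sum_congr rfl
        intro e he
        rw [Set.Finite.mem_toFinset] at he
        induction e with
        | _ u v =>
          rw [SimpleGraph.mem_edgeSet] at he
          have hu : u ≠ a := fun hc => hnota v (hc ▸ he)
          have hv : v ≠ a := fun hc => hnota u (hc ▸ he.symm)
          simp [hd', Function.update_of_ne hu, Function.update_of_ne hv]
      have hIH := ih F' hF'ac hcard' d'
      have hsum' : ∑ v, d' v + d a = ∑ v, d v := by
        rw [hd', Finset.sum_update_of_mem (Finset.mem_univ a),
          Finset.sdiff_singleton_eq_erase,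
          ← Finset.add_sum_erase _ d (Finset.mem_univ a)]
        omega
      have hminle : min (d a) (d x) ≤ d a := min_le_left _ _
      omega
  
theorem stmt14 {V : Type*} [Fintype V] (G : SimpleGraph V) (ρ : ℕ)
    (F : Fin ρ → SimpleGraph V)
    (hle : ∀ i, F i ≤ G) (hforest : ∀ i, (F i).IsAcyclic)
    (hcover : ∀ a b, G.Adj a b → ∃ i, (F i).Adj a b) :
    (∑ᶠ e ∈ G.edgeSet,
        Sym2.lift ⟨fun u v => min (G.neighborSet u).ncard (G.neighborSet v).ncard,
          fun u v => min_comm _ _⟩ e)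
      ≤ 2 * ρ * G.edgeSet.ncard := by
  classical
  set d : V → ℕ := fun v => (G.neighborSet v).ncard with hd
  set f : Sym2 V → ℕ :=
    Sym2.lift ⟨fun u v => min (d u) (d v), fun u v => min_comm _ _⟩ with hf
  have hGfin : G.edgeSet.Finite := Set.toFinite _
  have hdsum : ∑ v, d v = 2 * G.edgeSet.ncard := by
    have h1 : ∀ v, d v = G.degree v := by
      intro v
      rw [hd]
      simp only
      rw [Set.ncard_eq_toFinset_card']
      congr 1
    rw [Finset.sum_congr rfl (fun v _ => h1 v),
        SimpleGraph.sum_degrees_eq_twice_card_edges]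
    congr 1
    rw [Set.ncard_eq_toFinset_card']
    congr
  have hsub : hGfin.toFinset ⊆ (Finset.univ : Finset (Fin ρ)).biUnion
      (fun i => ((F i).edgeSet.toFinite).toFinset) := by
    intro e he
    rw [Set.Finite.mem_toFinset] at he
    rw [Finset.mem_biUnion]
    induction e with
    | _ u v =>
      rw [SimpleGraph.mem_edgeSet] at he
      obtain ⟨i, hi⟩ := hcover u v he
      exact ⟨i, Finset.mem_univ i, by rw [Set.Finite.mem_toFinset]; exact hi⟩
  calc (∑ᶠ e ∈ G.edgeSet, f e)
      = ∑ e ∈ hGfin.toFinset, f e :=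
        finsum_mem_eq_finite_toFinset_sum _ hGfin
    _ ≤ ∑ e ∈ (Finset.univ : Finset (Fin ρ)).biUnion
          (fun i => ((F i).edgeSet.toFinite).toFinset), f e :=
        Finset.sum_le_sum_of_subset hsub
    _ ≤ ∑ i : Fin ρ, ∑ e ∈ ((F i).edgeSet.toFinite).toFinset, f e :=
        my_sum_biUnion_le _ _ _
    _ ≤ ∑ _i : Fin ρ, 2 * G.edgeSet.ncard := by
        apply Finset.sum_le_sum
        intro i _
        have := my_forest_sum ((F i).edgeSet.ncard) (F i) (hforest i) rfl d
        rw [finsum_mem_eq_finite_toFinset_sum _ ((F i).edgeSet.toFinite)] at this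
        calc ∑ e ∈ ((F i).edgeSet.toFinite).toFinset, f e ≤ ∑ v, d v := this
          _ = 2 * G.edgeSet.ncard := hdsum
    _ = 2 * ρ * G.edgeSet.ncard := by
        rw [Finset.sum_const, Finset.card_univ, Fintype.card_fin, smul_eq_mul]
        ring
end
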